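/- Let $X$ and $Z$ be nonempty finite sets, $p_d$ a probability mass function on $X$, $\pi : Z \to \mathbb{R}_{>0}$ a prior probability mass function, $\nu : X \to \mathbb{R}^n$, $\psi : Z \to \mathbb{R}^m$, and $h : X \to \mathbb{R}_{>0}$. Consider the affine decoder family parametrized by $\theta = (W, a) \in \mathbb{R}^{n\times m} \times \mathbb{R}^n$ with $p_\theta(x\mid z) \propto h(x)\exp\langle \nu(x), W\psi(z) + a\rangle$ (normalized over $x$), and the encoder family $\mathcal{Q}$ of all conditional distributions of the form $q(z\mid x) \propto \beta(z)\exp\langle \psi(z), g(x)\rangle$ (normalized over $z$) with arbitrary $\beta : Z \to \mathbb{R}_{>0}$ and arbitrary $g : X \to \mathbb{R}^m$. Define the log-likelihood $L(\theta) = \sum_x p_d(x)\log \sum_z \pi(z) p_\theta(x\mid z)$ and the ELBO $L_B(\theta, q) = \sum_x p_d(x)\big[\sum_z q(z\mid x)\log p_\theta(x\mid z) - D_{KL}(q(\cdot\mid x)\,\|\,\pi)\big]$. Then: (i) $L_B(\theta, q) \le L(\theta)$ for all $\theta$ and all $q \in \mathcal{Q}$; (ii) for every $\theta$ there exists $q \in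 \mathcal{Q}$ with $L_B(\theta, q) = L(\theta)$; hence (iii) $\sup_{\theta, q\in\mathcal{Q}} L_B(\theta,q) = \sup_\theta L(\theta)$, and any global maximizer $(\theta^*, q^*)$ of $L_B$ satisfies $L(\theta^*) = \sup_\theta L(\theta)$, i.e. the approximation error is zero. -/

import Mathlib

open Finset

lemma gibbs_le {Z : Type*} [Fintype Z] [Nonempty Z] (q r : Z → ℝ) (hq : ∀ z, 0 < q z)
    (hq1 : ∑ z, q z = 1) (hr : ∀ z, 0 < r z) :
    ∑ z, q z * Real.log (r z / q z) ≤ Real.log (∑ z, r z) := by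
  set S := ∑ z, r z with hS
  have hSpos : 0 < S := Finset.sum_pos (fun z _ => hr z) univ_nonempty
  have key : ∀ z, q z * Real.log (r z / q z) ≤ r z / S - q z + q z * Real.log S := by
    intro z
    have hqz := hq z; have hrz := hr z
    have h1 : Real.log (r z / q z) = Real.log (r z / S / q z) + Real.log S := by
      rw [← Real.log_mul (by positivity) hSpos.ne']
      congr 1
      field_simp
    have h2 : Real.log (r z / S / q z) ≤ r z / S / q z - 1 :=
      Real.log_le_sub_one_of_pos (by positivity)
    have h3 : q z * (r z / S / q z) = r z / S := by field_simp
    nlinarith [mul_le_mul_of_nonneg_left h2 (hq z).le]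
  calc ∑ z, q z * Real.log (r z / q z) ≤ ∑ z, (r z / S - q z + q z * Real.log S) :=
        Finset.sum_le_sum fun z _ => key z
    _ = Real.log S := by
        rw [Finset.sum_add_distrib, Finset.sum_sub_distrib, ← Finset.sum_div,
          ← Finset.sum_mul, hq1, ← hS]
        field_simp
        ring

lemma gibbs_eq {Z : Type*} [Fintype Z] [Nonempty Z] (r : Z → ℝ) (hr : ∀ z, 0 < r z) :
    ∑ z, (r z / ∑ z', r z') * Real.log (r z / (r z / ∑ z', r z')) =
      Real.log (∑ z', r z') := by
  set S := ∑ z', r z' with hS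
  have hSpos : 0 < S := Finset.sum_pos (fun z _ => hr z) univ_nonempty
  have key : ∀ z, r z / (r z / S) = S := by
    intro z
    rw [div_div_eq_mul_div, mul_comm, mul_div_assoc, div_self (hr z).ne', mul_one]
  simp_rw [key]
  rw [← Finset.sum_mul, ← Finset.sum_div, ← hS, div_self hSpos.ne', one_mul]

/-- Corollary 1: for an affine decoder family `θ = (W, a)` and the encoder
family of all `q(z|x) ∝ β(z) exp⟨ψ(z), g(x)⟩` with positive `β` and arbitrary `g`:
(i) the ELBO lower-bounds the likelihood, (ii) the bound is attained for every `θ`,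
(iii) the suprema agree and any global ELBO maximizer maximizes the likelihood. -/
theorem stmt_4 {X Z : Type*} [Fintype X] [Fintype Z] [Nonempty X] [Nonempty Z] {n m : ℕ}
    (pd : X → ℝ) (hpd : ∀ x, 0 ≤ pd x) (hpd1 : ∑ x, pd x = 1)
    (π : Z → ℝ) (hπ : ∀ z, 0 < π z) (hπ1 : ∑ z, π z = 1)
    (ν : X → Fin n → ℝ) (ψ : Z → Fin m → ℝ)
    (h : X → ℝ) (hh : ∀ x, 0 < h x)
    (dec : Matrix (Fin n) (Fin m) ℝ × (Fin n → ℝ) → Z → X → ℝ)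
    (hdec : ∀ θ z x, dec θ z x =
        h x * Real.exp (∑ i, ν x i * ((θ.1).mulVec (ψ z) + θ.2) i) /
        ∑ x', h x' * Real.exp (∑ i, ν x' i * ((θ.1).mulVec (ψ z) + θ.2) i))
    (enc : (Z → ℝ) × (X → Fin m → ℝ) → X → Z → ℝ)
    (henc : ∀ φ x z, enc φ x z = φ.1 z * Real.exp (∑ j, ψ z j * φ.2 x j) /
        ∑ z', φ.1 z' * Real.exp (∑ j, ψ z' j * φ.2 x j))
    (L : Matrix (Fin n) (Fin m) ℝ × (Fin n → ℝ) → ℝ)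
    (hL : ∀ θ, L θ = ∑ x, pd x * Real.log (∑ z, π z * dec θ z x))
    (LB : Matrix (Fin n) (Fin m) ℝ × (Fin n → ℝ) → (Z → ℝ) × (X → Fin m → ℝ) → ℝ)
    (hLB : ∀ θ φ, LB θ φ = ∑ x, pd x * ((∑ z, enc φ x z * Real.log (dec θ z x)) -
        ∑ z, enc φ x z * Real.log (enc φ x z / π z))) :
    (∀ θ φ, (∀ z, 0 < φ.1 z) → LB θ φ ≤ L θ) ∧
    (∀ θ, ∃ φ, (∀ z, 0 < φ.1 z) ∧ LB θ φ = L θ) ∧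
    sSup {y | ∃ θ φ, (∀ z, 0 < φ.1 z) ∧ y = LB θ φ} = sSup {y | ∃ θ, y = L θ} ∧
    (∀ θs φs, (∀ z, 0 < φs.1 z) →
      (∀ θ φ, (∀ z, 0 < φ.1 z) → LB θ φ ≤ LB θs φs) → ∀ θ, L θ ≤ L θs) := by
  -- positivity of the decoder
  have hdecpos : ∀ θ z x, 0 < dec θ z x := by
    intro θ z x
    rw [hdec]
    apply div_pos (by have := hh x; positivity)
    exact Finset.sum_pos (fun x' _ => by have := hh x'; positivity) univ_nonempty
  have hrpos : ∀ θ x z, 0 < π z * dec θ z x := fun θ x z => mul_pos (hπ z) (hdecpos θ z x)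
  -- positivity and normalization of the encoder
  have hencpos : ∀ φ : (Z → ℝ) × (X → Fin m → ℝ), (∀ z, 0 < φ.1 z) → ∀ x z, 0 < enc φ x z := by
    intro φ hφ x z
    rw [henc]
    apply div_pos (by have := hφ z; positivity)
    exact Finset.sum_pos (fun z' _ => by have := hφ z'; positivity) univ_nonempty
  have hencsum : ∀ φ : (Z → ℝ) × (X → Fin m → ℝ), (∀ z, 0 < φ.1 z) → ∀ x,
      ∑ z, enc φ x z = 1 := by
    intro φ hφ x
    have hd : 0 < ∑ z', φ.1 z' * Real.exp (∑ j, ψ z' j * φ.2 x j) :=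
      Finset.sum_pos (fun z' _ => by have := hφ z'; positivity) univ_nonempty
    simp_rw [henc]
    rw [← Finset.sum_div, div_self hd.ne']
  -- rewriting the per-x ELBO integrand
  have hinner : ∀ θ (q : Z → ℝ), (∀ z, 0 < q z) → ∀ x : X,
      ((∑ z, q z * Real.log (dec θ z x)) - ∑ z, q z * Real.log (q z / π z)) =
        ∑ z, q z * Real.log ((π z * dec θ z x) / q z) := by
    intro θ q hq x
    rw [← Finset.sum_sub_distrib]
    apply Finset.sum_congr rfl
    intro z _
    rw [Real.log_div (by have := hrpos θ x z; positivity) (hq z).ne',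
        Real.log_div (hq z).ne' (hπ z).ne',
        Real.log_mul (hπ z).ne' (hdecpos θ z x).ne']
    ring
  -- Part (i)
  have part1 : ∀ θ φ, (∀ z, 0 < φ.1 z) → LB θ φ ≤ L θ := by
    intro θ φ hφ
    rw [hLB, hL]
    apply Finset.sum_le_sum
    intro x _
    apply mul_le_mul_of_nonneg_left _ (hpd x)
    rw [hinner θ (enc φ x) (hencpos φ hφ x) x]
    exact gibbs_le (enc φ x) (fun z => π z * dec θ z x) (hencpos φ hφ x)
      (hencsum φ hφ x) (fun z => hrpos θ x z)
  -- Part (ii): the posterior lies in the encoder family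
  have part2 : ∀ θ, ∃ φ, (∀ z, 0 < φ.1 z) ∧ LB θ φ = L θ := by
    intro θ
    set N : Z → ℝ := fun z => ∑ x', h x' * Real.exp (∑ i, ν x' i * ((θ.1).mulVec (ψ z) + θ.2) i)
      with hN
    have hNpos : ∀ z, 0 < N z := fun z =>
      Finset.sum_pos (fun x' _ => by have := hh x'; positivity) univ_nonempty
    refine ⟨⟨fun z => π z / N z, fun x j => ∑ i, ν x i * θ.1 i j⟩, fun z => div_pos (hπ z) (hNpos z), ?_⟩
    set φ : (Z → ℝ) × (X → Fin m → ℝ) :=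
      ⟨fun z => π z / N z, fun x j => ∑ i, ν x i * θ.1 i j⟩ with hφdef
    have hφ : ∀ z, 0 < φ.1 z := fun z => div_pos (hπ z) (hNpos z)
    -- the exponent splits
    have hsplit : ∀ x z, (∑ i, ν x i * ((θ.1).mulVec (ψ z) + θ.2) i) =
        (∑ j, ψ z j * φ.2 x j) + ∑ i, ν x i * θ.2 i := by
      intro x z
      have : ∑ i, ν x i * ((θ.1).mulVec (ψ z) + θ.2) i =
          (∑ i, ν x i * ∑ j, θ.1 i j * ψ z j) + ∑ i, ν x i * θ.2 i := by
        rw [← Finset.sum_add_distrib]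
        apply Finset.sum_congr rfl
        intro i _
        simp [Matrix.mulVec, dotProduct]
        ring
      rw [this]
      congr 1
      simp_rw [Finset.mul_sum]
      rw [Finset.sum_comm]
      apply Finset.sum_congr rfl
      intro j _
      show _ = ψ z j * ∑ i, ν x i * θ.1 i j
      rw [Finset.mul_sum]
      apply Finset.sum_congr rfl
      intro i _
      ring
    -- π z * dec θ z x factors
    have hfac : ∀ x z, π z * dec θ z x =
        (φ.1 z * Real.exp (∑ j, ψ z j * φ.2 x j)) * (h x * Real.exp (∑ i, ν x i * θ.2 i)) := by
      intro x z
      rw [hdec, hsplit, Real.exp_add]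
      have : φ.1 z = π z / N z := rfl
      rw [this, hN]
      field_simp
    -- enc φ is exactly the normalized posterior
    have hencform : ∀ x z, enc φ x z = (π z * dec θ z x) / ∑ z', π z' * dec θ z' x := by
      intro x z
      have hc : 0 < h x * Real.exp (∑ i, ν x i * θ.2 i) := by have := hh x; positivity
      rw [henc]
      simp_rw [hfac]
      rw [← Finset.sum_mul, mul_div_mul_right _ _ hc.ne']
    rw [hLB, hL]
    apply Finset.sum_congr rfl
    intro x _
    congr 1
    have hq : ∀ z, 0 < enc φ x z := hencpos φ hφ x
    rw [hinner θ (enc φ x) hq x]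
    simp_rw [hencform]
    exact gibbs_eq (fun z => π z * dec θ z x) (fun z => hrpos θ x z)
  refine ⟨part1, part2, ?_, ?_⟩
  · -- suprema agree
    set A := {y | ∃ θ φ, (∀ z, 0 < φ.1 z) ∧ y = LB θ φ} with hA
    set B := {y | ∃ θ, y = L θ} with hB
    have hBA : B ⊆ A := by
      rintro y ⟨θ, rfl⟩
      obtain ⟨φ, hφ, hEq⟩ := part2 θ
      exact ⟨θ, φ, hφ, hEq.symm⟩
    have hBne : B.Nonempty := ⟨L 0, 0, rfl⟩
    have hAne : A.Nonempty := hBne.mono hBA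
    have hub : ∀ a ∈ A, ∃ b ∈ B, a ≤ b := by
      rintro a ⟨θ, φ, hφ, rfl⟩
      exact ⟨L θ, ⟨θ, rfl⟩, part1 θ φ hφ⟩
    by_cases hbdd : BddAbove B
    · have hAbdd : BddAbove A := by
        obtain ⟨M, hM⟩ := hbdd
        refine ⟨M, fun a ha => ?_⟩
        obtain ⟨b, hb, hab⟩ := hub a ha
        exact hab.trans (hM hb)
      apply le_antisymm
      · apply csSup_le hAne
        intro a ha
        obtain ⟨b, hb, hab⟩ := hub a ha
        exact hab.trans (le_csSup hbdd hb)
      · exact csSup_le_csSup hAbdd hBne hBA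
    · have hAbdd : ¬ BddAbove A := fun hA => hbdd (hA.mono hBA)
      rw [Real.sSup_of_not_bddAbove hAbdd, Real.sSup_of_not_bddAbove hbdd]
  · -- any global ELBO maximizer maximizes L
    intro θs φs hφs hmax θ
    obtain ⟨φ, hφ, hEq⟩ := part2 θ
    calc L θ = LB θ φ := hEq.symm
      _ ≤ LB θs φs := hmax θ φ hφ
      _ ≤ L θs := part1 θs φs hφs
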